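/- Let G be a Rabin game on arena A with pairs (U_1, W_1), …, (U_k, W_k), and let X ⊆ V be such that A(X) is a subarena and there exists i ∈ {1, …, k} with X ∩ U_i ≠ ∅ and X ∩ W_i = ∅. Then Player 0 fully wins G(X) if and only if for every Y ⊊ X such that A(Y) is a subarena that is a 0-trap in G(X), Player 0 fully wins G(Y). -/

import Mathlib

open Set

/-- An arena: a finite directed bipartite graph where every vertex has an
outgoing edge.  The vertex set is `V0 ∪ V1` inside the finite type `α`. -/
structure Arena (α : Type) [Fintype α] where
  V0 : Set α
  V1 : Set α
  E : Set (α × α)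
  disj : Disjoint V0 V1
  bipartite : E ⊆ (V0 ×ˢ V1) ∪ (V1 ×ˢ V0)
  succ : ∀ v ∈ V0 ∪ V1, ∃ u, (v, u) ∈ E

variable {α : Type} [Fintype α]

/-- The set of positions of the arena. -/
def Arena.V (A : Arena α) : Set α := A.V0 ∪ A.V1

/-- The positions of Player σ (σ ∈ {0,1}). -/
def Arena.P (A : Arena α) (σ : Fin 2) : Set α := if σ = 0 then A.V0 else A.V1

/-- `A(X)` is a subarena: `X ⊆ V` and every vertex of `X` has an
outgoing edge inside `X`. -/
def Subarena (A : Arena α) (X : Set α) : Prop :=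
  X ⊆ A.V ∧ ∀ v ∈ X, ∃ u ∈ X, (v, u) ∈ A.E

/-- `A(Y)` is a σ-trap of the pseudo-arena `A(X)`: every vertex of
`Y ∩ V_{1-σ}` has an `E`-successor in `Y`, and every vertex of `Y ∩ V_σ`
has all of its `E`-successors inside `X` lying in `Y`.
A σ-trap of `A` itself is `TrapIn A A.V σ Y`. -/
def TrapIn (A : Arena α) (X : Set α) (σ : Fin 2) (Y : Set α) : Prop :=
  Y ⊆ X ∧
  (∀ v ∈ Y ∩ A.P (1 - σ), ∃ u ∈ Y, (v, u) ∈ A.E) ∧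
  (∀ v ∈ Y ∩ A.P σ, ∀ u, (v, u) ∈ A.E → u ∈ X → u ∈ Y)

/-- A play of the (pseudo-)arena `A(X)`: an infinite `E`-path staying in `X`. -/
def IsPlayIn (A : Arena α) (X : Set α) (ρ : ℕ → α) : Prop :=
  ∀ i, ρ i ∈ X ∧ (ρ i, ρ (i + 1)) ∈ A.E

/-- The set of vertices occurring infinitely often in the play `ρ`. -/
def InfOcc (ρ : ℕ → α) : Set α := {v | {i | ρ i = v}.Infinite}

/-- A strategy for Player σ in the game played on the pseudo-arena `A(X)`:
it maps a history (the finite prefix before the current vertex) and the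
current vertex of `V_σ ∩ X` to an `E`-successor inside `X`. -/
structure StrategyIn (A : Arena α) (X : Set α) (σ : Fin 2) where
  move : List α → α → α
  legal : ∀ h v, v ∈ X ∩ A.P σ → (v, move h v) ∈ A.E ∧ move h v ∈ X

/-- A play is consistent with a strategy for Player σ if every move from a
vertex of `V_σ` follows the strategy. -/
def ConsistentIn {A : Arena α} {X : Set α} {σ : Fin 2} (s : StrategyIn A X σ)
    (ρ : ℕ → α) : Prop :=
  ∀ i, ρ i ∈ A.P σ → ρ (i + 1) = s.move (List.ofFn fun j : Fin i => ρ j) (ρ i)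

/-- Player σ wins the game on `A(X)` (with payoff `payoff` describing the
plays won by Player 0) from position `v`. -/
def WinsFrom (A : Arena α) (X : Set α) (payoff : (ℕ → α) → Prop) (σ : Fin 2)
    (v : α) : Prop :=
  ∃ s : StrategyIn A X σ, ∀ ρ, IsPlayIn A X ρ → ρ 0 = v → ConsistentIn s ρ →
    (if σ = 0 then payoff ρ else ¬ payoff ρ)

/-- `Win_σ` of the game on `A(X)`. -/
def WinSet (A : Arena α) (X : Set α) (payoff : (ℕ → α) → Prop) (σ : Fin 2) :
    Set α :=
  {v ∈ X | WinsFrom A X payoff σ v}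

/-- Player σ fully wins the game on `A(X)`. -/
def FullyWins (A : Arena α) (X : Set α) (payoff : (ℕ → α) → Prop)
    (σ : Fin 2) : Prop :=
  ∀ v ∈ X, WinsFrom A X payoff σ v

/-- The attractor `Attr_σ(T, A(X))`: the least `W ⊇ T` containing every
`u ∈ X ∩ V_σ` with some `E`-successor in `W ∩ X` and every
`u ∈ X ∩ V_{1-σ}` all of whose `E`-successors inside `X` lie in `W`. -/
def AttrIn (A : Arena α) (X : Set α) (σ : Fin 2) (T : Set α) : Set α :=
  ⋂₀ {W | T ⊆ W ∧
    (∀ u ∈ X ∩ A.P σ, (∃ w ∈ W ∩ X, (u, w) ∈ A.E) → u ∈ W) ∧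
    (∀ u ∈ X ∩ A.P (1 - σ), (∀ w, (u, w) ∈ A.E → w ∈ X → w ∈ W) → u ∈ W)}

/-- The Müller winning condition: Player 0 wins the play `ρ` iff `Inf(ρ) ∈ Ω`. -/
def MullerPayoff (Ω : Set (Set α)) : (ℕ → α) → Prop := fun ρ => InfOcc ρ ∈ Ω

/-- The Rabin winning condition: Player 0 wins `ρ` iff some pair `(Uᵢ, Wᵢ)`
has `Inf(ρ) ∩ Uᵢ ≠ ∅` and `Inf(ρ) ∩ Wᵢ = ∅`. -/
def RabinPayoff {k : ℕ} (pairs : Fin k → Set α × Set α) : (ℕ → α) → Prop :=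
  fun ρ => ∃ i, (InfOcc ρ ∩ (pairs i).1).Nonempty ∧ InfOcc ρ ∩ (pairs i).2 = ∅


section Aux19

open Classical

/-! ### List machinery: longest suffix satisfying a predicate -/

lemma takeWhile_append_all {β : Type*} (p : β → Bool) (a b : List β)
    (h : ∀ x ∈ a, p x = true) :
    (a ++ b).takeWhile p = a ++ b.takeWhile p := by
  induction a with
  | nil => simp
  | cons x t ih =>
      rw [List.cons_append, List.takeWhile_cons, if_pos (h x List.mem_cons_self),
        ih (fun y hy => h y (List.mem_cons_of_mem x hy)), List.cons_append]

/-- The longest suffix of `l` all of whose elements satisfy `p`. -/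
noncomputable def lsuf {β : Type*} (p : β → Prop) (l : List β) : List β :=
  (l.reverse.takeWhile (fun x => decide (p x))).reverse

lemma lsuf_spec {β : Type*} (p : β → Prop) (l₁ l₂ : List β) (h₂ : ∀ x ∈ l₂, p x)
    (h₁ : ∀ x, l₁.getLast? = some x → ¬ p x) : lsuf p (l₁ ++ l₂) = l₂ := by
  unfold lsuf
  have hall : ∀ x ∈ l₂.reverse, (fun x => decide (p x)) x = true := by
    intro x hx
    simp only [decide_eq_true_eq]
    exact h₂ x (List.mem_reverse.mp hx)
  rw [List.reverse_append, takeWhile_append_all _ _ _ hall]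
  have hnil : l₁.reverse.takeWhile (fun x => decide (p x)) = [] := by
    cases hrev : l₁.reverse with
    | nil => simp
    | cons x t =>
        have hx : l₁.getLast? = some x := by
          rw [← List.head?_reverse, hrev]; rfl
        rw [List.takeWhile_cons, if_neg (by simpa using h₁ x hx)]
  rw [hnil, List.append_nil, List.reverse_reverse]

/-- The vertex at which the current `p`-suffix of the play was entered. -/
noncomputable def entryOf {β : Type*} (p : β → Prop) (l : List β) (v : β) : β :=
  (lsuf p l).headD v

/-! ### Generic facts about infinite occurrence sets -/

lemma infOcc_shift {β : Type} [Fintype β] (ρ : ℕ → β) (N : ℕ) :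
    InfOcc (fun j => ρ (N + j)) = InfOcc ρ := by
  ext v
  simp only [InfOcc, Set.mem_setOf_eq]
  constructor
  · intro h
    have h2 : ((N + ·) '' {j | ρ (N + j) = v}).Infinite :=
      h.image (fun a _ b _ hab => by omega)
    exact h2.mono (by rintro i ⟨j, hj, rfl⟩; exact hj)
  · intro h
    have h2 : ({i | ρ i = v} \ Set.Iio N).Infinite := h.diff (Set.finite_Iio N)
    have h3 : ((· - N) '' ({i | ρ i = v} \ Set.Iio N)).Infinite :=
      h2.image (fun a ha b hb hab => by
        simp only [Set.mem_diff, Set.mem_Iio, not_lt] at ha hb; omega)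
    refine h3.mono ?_
    rintro j ⟨i, ⟨hi, hiN⟩, rfl⟩
    simp only [Set.mem_Iio, not_lt] at hiN
    simp only [Set.mem_setOf_eq]
    rw [show N + (i - N) = i by omega]
    exact hi

lemma infOcc_of_visits {β : Type} [Fintype β] (ρ : ℕ → β) (S : Set β)
    (h : {j | ρ j ∈ S}.Infinite) : ∃ v ∈ S, v ∈ InfOcc ρ := by
  by_contra hc
  push_neg at hc
  have hsub : {j | ρ j ∈ S} ⊆ ⋃ v ∈ S, {j | ρ j = v} := fun j hj =>
    Set.mem_biUnion hj rfl
  have hf : (⋃ v ∈ S, {j | ρ j = v}).Finite :=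
    Set.Finite.biUnion (Set.toFinite S) (fun v hv => Set.not_infinite.mp (hc v hv))
  exact h (hf.subset hsub)

lemma infinite_of_unbounded (S : Set ℕ) (h : ∀ N, ∃ j ≥ N, j ∈ S) : S.Infinite := by
  by_contra hfin
  rw [Set.not_infinite] at hfin
  obtain ⟨b, hb⟩ := hfin.bddAbove
  obtain ⟨j, hj, hjS⟩ := h (b + 1)
  exact absurd (hb hjS) (by omega)

/-! ### The attractor construction -/

variable {α : Type} [Fintype α]

lemma Arena.P_zero (A : Arena α) : A.P 0 = A.V0 := if_pos rfl

lemma Arena.P_one (A : Arena α) : A.P 1 = A.V1 := if_neg (by decide)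

def attrN (A : Arena α) (X T : Set α) : ℕ → Set α
  | 0 => T
  | n + 1 => attrN A X T n
      ∪ {u | u ∈ X ∩ A.P 0 ∧ ∃ w ∈ attrN A X T n ∩ X, (u, w) ∈ A.E}
      ∪ {u | u ∈ X ∩ A.P 1 ∧ ∀ w, (u, w) ∈ A.E → w ∈ X → w ∈ attrN A X T n}

def Zset (A : Arena α) (X T : Set α) : Set α := {v | ∃ n, v ∈ attrN A X T n}

noncomputable def rkOf (A : Arena α) (X T : Set α) (v : α) : ℕ :=
  sInf {n | v ∈ attrN A X T n}

lemma attrN_mono (A : Arena α) (X T : Set α) {m n : ℕ} (h : m ≤ n) :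
    attrN A X T m ⊆ attrN A X T n :=
  monotone_nat_of_le_succ (fun k v hv => Or.inl (Or.inl hv)) h

lemma attrN_subset (A : Arena α) (X T : Set α) (hTX : T ⊆ X) :
    ∀ n, attrN A X T n ⊆ X
  | 0 => hTX
  | n + 1 => by
      rintro v ((h | h) | h)
      · exact attrN_subset A X T hTX n h
      · exact h.1.1
      · exact h.1.1

lemma Zset_subset (A : Arena α) (X T : Set α) (hTX : T ⊆ X) : Zset A X T ⊆ X := by
  rintro v ⟨n, hn⟩; exact attrN_subset A X T hTX n hn

lemma rkOf_mem {A : Arena α} {X T : Set α} {v : α} (hv : v ∈ Zset A X T) :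
    v ∈ attrN A X T (rkOf A X T v) := Nat.sInf_mem hv

lemma rkOf_le {A : Arena α} {X T : Set α} {v : α} {n : ℕ} (hv : v ∈ attrN A X T n) :
    rkOf A X T v ≤ n := Nat.sInf_le hv

/-- Dichotomy for a vertex of the attractor that is not in the target. -/
lemma attr_case (A : Arena α) (X T : Set α) {v : α}
    (hv : v ∈ Zset A X T) (hvT : v ∉ T) :
    (v ∈ X ∩ A.P 0 ∧ ∃ w ∈ attrN A X T (rkOf A X T v - 1) ∩ X, (v, w) ∈ A.E) ∨
    (v ∈ X ∩ A.P 1 ∧ ∀ w, (v, w) ∈ A.E → w ∈ X →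
      w ∈ attrN A X T (rkOf A X T v - 1)) := by
  have hmem : v ∈ attrN A X T (rkOf A X T v) := rkOf_mem hv
  cases hrk : rkOf A X T v with
  | zero =>
      rw [hrk] at hmem
      simp only [attrN] at hmem
      exact absurd hmem hvT
  | succ m =>
      rw [hrk] at hmem
      have hnot : v ∉ attrN A X T m := fun hc => by
        have := rkOf_le hc; omega
      simp only [Nat.add_sub_cancel]
      rcases hmem with (h | h) | h
      · exact absurd h hnot
      · exact Or.inl h
      · exact Or.inr h

/-! ### Strategies -/

/-- Some successor inside `X`. -/
noncomputable def anySucc (A : Arena α) (X : Set α) (hX : Subarena A X) (v : α) : α :=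
  if hv : v ∈ X then (hX.2 v hv).choose else v

lemma anySucc_spec (A : Arena α) (X : Set α) (hX : Subarena A X) {v : α} (hv : v ∈ X) :
    (v, anySucc A X hX v) ∈ A.E ∧ anySucc A X hX v ∈ X := by
  unfold anySucc
  rw [dif_pos hv]
  obtain ⟨h1, h2⟩ := (hX.2 v hv).choose_spec
  exact ⟨h2, h1⟩

/-- The attractor move of Player 0. -/
noncomputable def attrMove (A : Arena α) (X T : Set α) (hX : Subarena A X) (v : α) : α :=
  if hv : ∃ w, (v, w) ∈ A.E ∧ w ∈ attrN A X T (rkOf A X T v - 1) ∩ X then hv.choose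
  else anySucc A X hX v

lemma attrMove_legal (A : Arena α) (X T : Set α) (hX : Subarena A X) {v : α}
    (hv : v ∈ X) : (v, attrMove A X T hX v) ∈ A.E ∧ attrMove A X T hX v ∈ X := by
  unfold attrMove
  split
  · next h => exact ⟨h.choose_spec.1, h.choose_spec.2.2⟩
  · exact anySucc_spec A X hX hv

lemma attrMove_decr (A : Arena α) (X T : Set α) (hX : Subarena A X) {v : α}
    (hv : v ∈ Zset A X T) (hvT : v ∉ T) (hv0 : v ∈ A.P 0) :
    attrMove A X T hX v ∈ attrN A X T (rkOf A X T v - 1) := by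
  rcases attr_case A X T hv hvT with ⟨_, w, hw1, hw2⟩ | ⟨⟨_, hP1⟩, _⟩
  · have hex : ∃ w, (v, w) ∈ A.E ∧ w ∈ attrN A X T (rkOf A X T v - 1) ∩ X :=
      ⟨w, hw2, hw1⟩
    unfold attrMove
    rw [dif_pos hex]
    exact hex.choose_spec.2.1
  · rw [Arena.P_zero] at hv0
    rw [Arena.P_one] at hP1
    exact absurd hP1 (Set.disjoint_left.mp A.disj hv0)

/-- A trivial legal strategy on a subarena, used as junk value. -/
noncomputable def junkStrat (A : Arena α) (Y : Set α) (hY : Subarena A Y) (σ : Fin 2) :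
    StrategyIn A Y σ where
  move _ v := if hv : v ∈ Y then (hY.2 v hv).choose else v
  legal h v hv := by
    rw [dif_pos hv.1]
    obtain ⟨h1, h2⟩ := (hY.2 v hv.1).choose_spec
    exact ⟨h2, h1⟩

/-- The combined strategy: attract to `T` on the attractor `Z`, and elsewhere
play the winning strategy of the trap `Y = X \\ Z` associated with the vertex
through which the current `Y`-suffix of the play was entered. -/
noncomputable def combMove (A : Arena α) (X T : Set α) (hX : Subarena A X)
    (sY : α → StrategyIn A (X \ Zset A X T) 0) (h : List α) (v : α) : α :=
  if v ∈ Zset A X T then attrMove A X T hX v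
  else (sY (entryOf (· ∈ X \ Zset A X T) h v)).move (lsuf (· ∈ X \ Zset A X T) h) v

noncomputable def combStrat (A : Arena α) (X T : Set α) (hX : Subarena A X)
    (hTX : T ⊆ X) (sY : α → StrategyIn A (X \ Zset A X T) 0) : StrategyIn A X 0 where
  move := combMove A X T hX sY
  legal h v hv := by
    unfold combMove
    by_cases hz : v ∈ Zset A X T
    · rw [if_pos hz]
      exact attrMove_legal A X T hX hv.1
    · rw [if_neg hz]
      have hY : v ∈ X \ Zset A X T := ⟨hv.1, hz⟩
      have hleg := (sY (entryOf (· ∈ X \ Zset A X T) h v)).legal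
        (lsuf (· ∈ X \ Zset A X T) h) v ⟨hY, hv.2⟩
      exact ⟨hleg.1, hleg.2.1⟩

end Aux19

/-- for a Rabin game `G` and a subarena `A(X)` such that some
pair `(Uᵢ, Wᵢ)` has `X ∩ Uᵢ ≠ ∅` and `X ∩ Wᵢ = ∅`, Player 0 fully wins
`G(X)` iff Player 0 fully wins `G(Y)` for every proper subarena `A(Y)` that
is a 0-trap in `G(X)`. -/
theorem stmt19 (A : Arena α) {k : ℕ} (pairs : Fin k → Set α × Set α)
    (hpairs : ∀ i, (pairs i).1 ⊆ A.V ∧ (pairs i).2 ⊆ A.V)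
    (X : Set α) (hX : Subarena A X)
    (hcond : ∃ i, (X ∩ (pairs i).1).Nonempty ∧ X ∩ (pairs i).2 = ∅) :
    FullyWins A X (RabinPayoff pairs) 0 ↔
      ∀ Y, Y ⊂ X → Subarena A Y → TrapIn A X 0 Y →
        FullyWins A Y (RabinPayoff pairs) 0 := by
  classical
  constructor
  · -- easy direction: restrict a winning strategy to the trap
    intro hFW Y hYX hYsub hYtrap v hv
    obtain ⟨s, hs⟩ := hFW v (hYX.subset hv)
    refine ⟨⟨s.move, ?_⟩, ?_⟩
    · intro h u hu
      have h1 := s.legal h u ⟨hYX.subset hu.1, hu.2⟩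
      exact ⟨h1.1, hYtrap.2.2 u hu _ h1.1 h1.2⟩
    · intro ρ hρ h0 hcons
      exact hs ρ (fun i => ⟨hYX.subset (hρ i).1, (hρ i).2⟩) h0 hcons
  · -- hard direction
    intro hyp u₀ hu₀
    obtain ⟨i, hU, hW⟩ := hcond
    set T : Set α := X ∩ (pairs i).1 with hTdef
    have hTX : T ⊆ X := Set.inter_subset_left
    -- closure properties of the attractor
    have hclose0 : ∀ v ∈ X ∩ A.P 0, ∀ u, (v, u) ∈ A.E → u ∈ Zset A X T →
        v ∈ Zset A X T := by
      intro v hv u he hu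
      obtain ⟨n, hn⟩ := hu
      exact ⟨n + 1, Or.inl (Or.inr ⟨hv, u, ⟨hn, attrN_subset A X T hTX n hn⟩, he⟩)⟩
    have hclose1 : ∀ v ∈ X ∩ A.P 1,
        (∀ w, (v, w) ∈ A.E → w ∈ X → w ∈ Zset A X T) → v ∈ Zset A X T := by
      intro v hv hall
      refine ⟨Finset.univ.sup (rkOf A X T) + 1, Or.inr ⟨hv, fun w he hw => ?_⟩⟩
      exact attrN_mono A X T (Finset.le_sup (Finset.mem_univ w))
        (rkOf_mem (hall w he hw))
    have hVP : ∀ v ∈ X, v ∈ A.P 0 ∨ v ∈ A.P 1 := by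
      intro v hv
      rcases hX.1 hv with h | h
      · exact Or.inl (by rw [Arena.P_zero]; exact h)
      · exact Or.inr (by rw [Arena.P_one]; exact h)
    -- Y := X \ Z is a subarena and a 0-trap
    have hsuccY : ∀ v ∈ X \ Zset A X T, ∃ u ∈ X \ Zset A X T, (v, u) ∈ A.E := by
      intro v hv
      rcases hVP v hv.1 with h0 | h1
      · obtain ⟨u, huX, hue⟩ := hX.2 v hv.1
        exact ⟨u, ⟨huX, fun hu => hv.2 (hclose0 v ⟨hv.1, h0⟩ u hue hu)⟩, hue⟩
      · by_contra hno
        push_neg at hno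
        refine hv.2 (hclose1 v ⟨hv.1, h1⟩ fun w he hwX => ?_)
        by_contra hwZ
        exact hno w ⟨hwX, hwZ⟩ he
    have htrap0 : ∀ v ∈ (X \ Zset A X T) ∩ A.P 0, ∀ u, (v, u) ∈ A.E → u ∈ X →
        u ∈ X \ Zset A X T := by
      intro v hv u he huX
      exact ⟨huX, fun hu => hv.1.2 (hclose0 v ⟨hv.1.1, hv.2⟩ u he hu)⟩
    have hYsub : Subarena A (X \ Zset A X T) :=
      ⟨Set.diff_subset.trans hX.1, hsuccY⟩
    have hYtrap : TrapIn A X 0 (X \ Zset A X T) := by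
      refine ⟨Set.diff_subset, ?_, htrap0⟩
      intro v hv
      have h1 : (1 - 0 : Fin 2) = 1 := by decide
      rw [h1] at hv
      exact hsuccY v hv.1
    have hYss : X \ Zset A X T ⊂ X := by
      obtain ⟨t, ht⟩ := hU
      refine (Set.ssubset_iff_of_subset Set.diff_subset).mpr ⟨t, ht.1, fun h => ?_⟩
      exact h.2 ⟨0, by simp only [attrN]; exact ht⟩
    have hFWY := hyp (X \ Zset A X T) hYss hYsub hYtrap
    have hchoice : ∀ w, ∃ s : StrategyIn A (X \ Zset A X T) 0,
        w ∈ X \ Zset A X T → ∀ ρ, IsPlayIn A (X \ Zset A X T) ρ → ρ 0 = w →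
          ConsistentIn s ρ → RabinPayoff pairs ρ := by
      intro w
      by_cases hw : w ∈ X \ Zset A X T
      · obtain ⟨s, hs⟩ := hFWY w hw
        refine ⟨s, fun _ ρ h1 h2 h3 => ?_⟩
        simpa using hs ρ h1 h2 h3
      · exact ⟨junkStrat A (X \ Zset A X T) hYsub 0, fun h => absurd h hw⟩
    choose sY hsY using hchoice
    refine ⟨combStrat A X T hX hTX sY, ?_⟩
    intro ρ hplay h0 hcons
    rw [if_pos rfl]
    have hmove : ∀ j, ρ j ∈ A.P 0 →
        ρ (j + 1) = combMove A X T hX sY (List.ofFn fun t : Fin j => ρ t) (ρ j) :=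
      hcons
    -- every visit to the attractor leads to a visit of T
    have reach : ∀ n j, ρ j ∈ attrN A X T n → ∃ m, ρ (j + m) ∈ T := by
      intro n
      induction n with
      | zero =>
          intro j hj
          simp only [attrN] at hj
          exact ⟨0, hj⟩
      | succ n ih =>
          intro j hj
          by_cases hT : ρ j ∈ T
          · exact ⟨0, hT⟩
          · have hZ : ρ j ∈ Zset A X T := ⟨n + 1, hj⟩
            have hrk : rkOf A X T (ρ j) ≤ n + 1 := rkOf_le hj
            have hnext : ρ (j + 1) ∈ attrN A X T n := by
              rcases attr_case A X T hZ hT with ⟨⟨hX1, hP0⟩, _⟩ | ⟨⟨hX1, hP1⟩, hall⟩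
              · have hstep : ρ (j + 1) = attrMove A X T hX (ρ j) := by
                  rw [hmove j hP0]
                  unfold combMove
                  rw [if_pos hZ]
                exact attrN_mono A X T (by omega)
                  (hstep ▸ attrMove_decr A X T hX hZ hT hP0)
              · exact attrN_mono A X T (by omega)
                  (hall _ (hplay j).2 (hplay (j + 1)).1)
            obtain ⟨m, hm⟩ := ih (j + 1) hnext
            exact ⟨m + 1, by rw [show j + (m + 1) = j + 1 + m by omega]; exact hm⟩
    by_cases hcase : ∃ N, ∀ j ≥ N, ρ j ∈ X \ Zset A X T
    · -- the play remains in the trap from some point on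
      obtain ⟨N, hN, hNmin⟩ : ∃ N, (∀ j ≥ N, ρ j ∈ X \ Zset A X T) ∧
          ∀ M, M < N → ¬ ∀ j ≥ M, ρ j ∈ X \ Zset A X T :=
        ⟨Nat.find hcase, Nat.find_spec hcase, fun M hM => Nat.find_min hcase hM⟩
      have hprev : ∀ x, (List.ofFn fun t : Fin N => ρ t).getLast? = some x →
          ¬ x ∈ X \ Zset A X T := by
        cases N with
        | zero =>
            intro x hx
            simp [List.ofFn_zero] at hx
        | succ M =>
            intro x hx
            rw [List.ofFn_succ', List.concat_eq_append, List.getLast?_concat] at hx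
            obtain rfl : ρ (Fin.last M) = x := Option.some.inj hx
            intro hMY
            have hallM : ∀ j ≥ M, ρ j ∈ X \ Zset A X T := by
              intro j hj
              rcases eq_or_lt_of_le hj with rfl | hj'
              · simpa using hMY
              · exact hN j hj'
            exact hNmin M (Nat.lt_succ_self M) hallM
      have hdecomp : ∀ j : ℕ, (List.ofFn fun t : Fin (N + j) => ρ t) =
          (List.ofFn fun t : Fin N => ρ t) ++ (List.ofFn fun t : Fin j => ρ (N + t)) := by
        intro j
        rw [List.ofFn_add]
        congr 1
      have hlsuf : ∀ j : ℕ,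
          lsuf (· ∈ X \ Zset A X T) (List.ofFn fun t : Fin (N + j) => ρ t)
            = List.ofFn fun t : Fin j => ρ (N + t) := by
        intro j
        rw [hdecomp j]
        apply lsuf_spec
        · intro x hx
          rw [List.mem_ofFn] at hx
          obtain ⟨t, rfl⟩ := hx
          exact hN (N + t) (Nat.le_add_right N t)
        · exact hprev
      have hentry : ∀ j : ℕ, entryOf (· ∈ X \ Zset A X T)
          (List.ofFn fun t : Fin (N + j) => ρ t) (ρ (N + j)) = ρ N := by
        intro j
        unfold entryOf
        rw [hlsuf j]
        cases j with
        | zero => simp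
        | succ t => rw [List.ofFn_succ]; simp
      have hplayY : IsPlayIn A (X \ Zset A X T) (fun t => ρ (N + t)) :=
        fun t => ⟨hN (N + t) (Nat.le_add_right N t), (hplay (N + t)).2⟩
      have hconsY : ConsistentIn (sY (ρ N)) (fun t => ρ (N + t)) := by
        intro t ht
        show ρ (N + (t + 1)) = _
        rw [show N + (t + 1) = (N + t) + 1 from rfl, hmove (N + t) ht]
        unfold combMove
        rw [if_neg (hN (N + t) (Nat.le_add_right N t)).2, hlsuf t, hentry t]
      have hRP := hsY (ρ N) (hN N le_rfl) (fun t => ρ (N + t)) hplayY rfl hconsY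
      unfold RabinPayoff at hRP ⊢
      rwa [infOcc_shift ρ N] at hRP
    · -- the play visits the attractor, hence T, infinitely often
      push_neg at hcase
      have hTinf : {j | ρ j ∈ T}.Infinite := by
        apply infinite_of_unbounded
        intro N
        obtain ⟨j, hjN, hjY⟩ := hcase N
        have hjZ : ρ j ∈ Zset A X T := by
          by_contra hz
          exact hjY ⟨(hplay j).1, hz⟩
        obtain ⟨n, hn⟩ := hjZ
        obtain ⟨m, hm⟩ := reach n j hn
        exact ⟨j + m, by omega, hm⟩
      obtain ⟨t, htT, htInf⟩ := infOcc_of_visits ρ T hTinf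
      rw [hTdef] at htT
      refine ⟨i, ⟨t, htInf, htT.2⟩, ?_⟩
      apply Set.eq_empty_iff_forall_notMem.mpr
      intro w hw
      have hwX : w ∈ X := by
        obtain ⟨j, hj⟩ := hw.1.nonempty
        exact hj ▸ (hplay j).1
      have hmem : w ∈ X ∩ (pairs i).2 := ⟨hwX, hw.2⟩
      rw [hW] at hmem
      exact hmem
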